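/- Let (A, F) be a unary algebra equipped with the topology whose open sets are generated by the universes of subalgebras. Then (A, F) is a Ramsey algebra if and only if the set S = {c ∈ A : f(c) = c for all f ∈ F} of common fixed points is dense in A. -/

import Mathlib

namespace RamseyAlg

/- Orderly-term syntax trees over an operation-index type `ι`:
`leaf` is the identity (a single variable), `node g f` applies the basic
operation `g` to the results of the trees in the forest `f`. -/
mutual
  inductive OTree (ι : Type) : Type
    | leaf : OTree ι
    | node : ι → OForest ι → OTree ι
  inductive OForest (ι : Type) : Type
    | nil : OForest ι
    | cons : OTree ι → OForest ι → OForest ι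
end

def OForest.length {ι : Type} : OForest ι → ℕ
  | .nil => 0
  | .cons _ f => f.length + 1

/- Well-formedness: each node applies a `k`-ary basic operation to exactly
`k` subtrees, where `ar` gives the arities. -/
mutual
  def OTree.WF {ι : Type} (ar : ι → ℕ) : OTree ι → Prop
    | .leaf => True
    | .node g f => OForest.length f = ar g ∧ OForest.WF ar f
  def OForest.WF {ι : Type} (ar : ι → ℕ) : OForest ι → Prop
    | .nil => True
    | .cons t f => OTree.WF ar t ∧ OForest.WF ar f
end

/- Evaluation of an orderly term on an input list: the variables of the term
consume an initial segment of the list, in order, each exactly once; what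
remains of the list is returned alongside the value. -/
mutual
  def OTree.evalAux {ι A : Type} (F : ι → List A → A) :
      OTree ι → List A → Option (A × List A)
    | .leaf, [] => none
    | .leaf, a :: rest => some (a, rest)
    | .node g f, l =>
      match OForest.evalAux F f l with
      | none => none
      | some (rs, rest) => some (F g rs, rest)
  def OForest.evalAux {ι A : Type} (F : ι → List A → A) :
      OForest ι → List A → Option (List A × List A)
    | .nil, l => some ([], l)
    | .cons t f, l =>
      match OTree.evalAux F t l with
      | none => none
      | some (r, rest) =>
        match OForest.evalAux F f rest with
        | none => none
        | some (rs, rest') => some (r :: rs, rest')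
end

/- The value of the orderly term `t` on the finite sequence `l`, defined
exactly when the variables of `t` consume all of `l`. -/
def OTree.eval {ι A : Type} (F : ι → List A → A) (t : OTree ι) (l : List A) :
    Option A :=
  match OTree.evalAux F t l with
  | some (a, []) => some a
  | _ => none

/- `Reduction ar F a b` : `a` is a reduction of `b` with respect to `F`, i.e.
there are well-formed orderly terms `t j` applied to consecutive disjoint
finite subsequences of `b` (extracted by the strictly monotone `e`, in blocks
of lengths `len j`) producing the terms of `a` in order. -/
def Reduction {ι A : Type} (ar : ι → ℕ) (F : ι → List A → A)
    (a b : ℕ → A) : Prop :=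
  ∃ (t : ℕ → OTree ι) (len : ℕ → ℕ) (e : ℕ → ℕ),
    StrictMono e ∧ (∀ j, (t j).WF ar) ∧
    ∀ j, (t j).eval F ((List.range (len j)).map
        (fun i => b (e ((∑ m ∈ Finset.range j, len m) + i)))) = some (a j)

/- `FR ar F b` : the set of values of orderly terms over `F` applied to
finite subsequences of `b`. -/
def FR {ι A : Type} (ar : ι → ℕ) (F : ι → List A → A) (b : ℕ → A) : Set A :=
  { x | ∃ (t : OTree ι) (l : List ℕ), t.WF ar ∧ l.Chain' (· < ·) ∧
      t.eval F (l.map b) = some x }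

/- `(A, F)` is a Ramsey algebra: every infinite sequence has, for every
`X ⊆ A`, a reduction homogeneous for `X`. -/
def RamseyAlgebra {ι A : Type} (ar : ι → ℕ) (F : ι → List A → A) : Prop :=
  ∀ (b : ℕ → A) (X : Set A), ∃ a : ℕ → A,
    Reduction ar F a b ∧ (FR ar F a ⊆ X ∨ FR ar F a ∩ X = ∅)

end RamseyAlg

namespace Stmt13Aux
open RamseyAlg

variable {ι A : Type}

/-- The subalgebra generated by `x`. -/
inductive Cl (F : ι → A → A) (x : A) : A → Prop
  | base : Cl F x x
  | step (i : ι) (y : A) : Cl F x y → Cl F x (F i y)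

mutual
  def tval (Fop : ι → List A → A) : OTree ι → A → A
    | .leaf, x => x
    | .node g f, x => Fop g (fval Fop f x)
  def fval (Fop : ι → List A → A) : OForest ι → A → List A
    | .nil, _ => []
    | .cons t f, x => tval Fop t x :: fval Fop f x
end

mutual
  theorem tree_evalAux_cons (Fop : ι → List A → A) :
      ∀ (t : OTree ι), t.WF (fun _ => 1) → ∀ (x : A) (l : List A),
        OTree.evalAux Fop t (x :: l) = some (tval Fop t x, l)
    | .leaf, _, x, l => by simp [OTree.evalAux, tval]
    | .node g f, hwf, x, l => by
      obtain ⟨hlen, hwff⟩ := hwf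
      have := forest_evalAux_cons Fop f hwff hlen x l
      simp [OTree.evalAux, this, tval]
  theorem forest_evalAux_cons (Fop : ι → List A → A) :
      ∀ (f : OForest ι), f.WF (fun _ => 1) → f.length = 1 → ∀ (x : A) (l : List A),
        OForest.evalAux Fop f (x :: l) = some (fval Fop f x, l)
    | .nil, _, hlen, _, _ => by simp [OForest.length] at hlen
    | .cons t f', hwf, hlen, x, l => by
      obtain ⟨hwt, hwf'⟩ := hwf
      have hf' : f' = .nil := by
        cases f' with
        | nil => rfl
        | cons a b => simp [OForest.length] at hlen
      subst hf'
      have := tree_evalAux_cons Fop t hwt x l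
      simp [OForest.evalAux, this, fval]
end

mutual
  theorem tree_evalAux_nil (Fop : ι → List A → A) :
      ∀ (t : OTree ι), t.WF (fun _ => 1) →
        OTree.evalAux Fop t ([] : List A) = none
    | .leaf, _ => by simp [OTree.evalAux]
    | .node g f, hwf => by
      obtain ⟨hlen, hwff⟩ := hwf
      have := forest_evalAux_nil Fop f hwff hlen
      simp [OTree.evalAux, this]
  theorem forest_evalAux_nil (Fop : ι → List A → A) :
      ∀ (f : OForest ι), f.WF (fun _ => 1) → f.length = 1 →
        OForest.evalAux Fop f ([] : List A) = none
    | .nil, _, hlen => by simp [OForest.length] at hlen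
    | .cons t f', hwf, hlen => by
      obtain ⟨hwt, _⟩ := hwf
      have := tree_evalAux_nil Fop t hwt
      simp [OForest.evalAux, this]
end

/-- `eval` on a singleton list. -/
theorem eval_singleton (Fop : ι → List A → A) (t : OTree ι)
    (h : t.WF (fun _ => 1)) (x : A) :
    t.eval Fop [x] = some (tval Fop t x) := by
  simp [OTree.eval, tree_evalAux_cons Fop t h x []]

/-- If `eval` succeeds on a list, the list is a singleton. -/
theorem eval_eq_some (Fop : ι → List A → A) (t : OTree ι)
    (h : t.WF (fun _ => 1)) (l : List A) (a : A)
    (he : t.eval Fop l = some a) : ∃ x, l = [x] ∧ a = tval Fop t x := by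
  cases l with
  | nil =>
    simp [OTree.eval, tree_evalAux_nil Fop t h] at he
  | cons x l' =>
    rw [OTree.eval, tree_evalAux_cons Fop t h x l'] at he
    cases l' with
    | nil => simp at he; exact ⟨x, rfl, he.symm⟩
    | cons y l'' => simp at he

end Stmt13Aux

namespace Stmt13Aux
open RamseyAlg

variable {ι A : Type}

theorem Cl.trans {F : ι → A → A} {x y z : A} (hxy : Cl F x y) (hyz : Cl F y z) :
    Cl F x z := by
  induction hyz with
  | base => exact hxy
  | step i w _ ih => exact Cl.step i w ih

theorem Cl.subset_closed {F : ι → A → A} {x : A} {U : Set A}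
    (hU : ∀ i, ∀ y ∈ U, F i y ∈ U) (hx : x ∈ U) {y : A} (hy : Cl F x y) : y ∈ U := by
  induction hy with
  | base => exact hx
  | step i w _ ih => exact hU i w ih

theorem Cl.eq_of_fixed {F : ι → A → A} {x : A} (hx : ∀ i, F i x = x)
    {y : A} (hy : Cl F x y) : y = x := by
  induction hy with
  | base => rfl
  | step i w _ ih => rw [ih]; exact hx i

theorem tval_mem_Cl (F : ι → A → A) (Fop : ι → List A → A)
    (hOp : ∀ i x, Fop i [x] = F i x) :
    ∀ (t : OTree ι), t.WF (fun _ => 1) → ∀ x, Cl F x (tval Fop t x)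
  | .leaf, _, x => Cl.base
  | .node g f, hwf, x => by
    obtain ⟨hlen, hwff⟩ := hwf
    cases f with
    | nil => simp [OForest.length] at hlen
    | cons t' f' =>
      cases f' with
      | cons a b => simp [OForest.length] at hlen
      | nil =>
        obtain ⟨hwt, _⟩ := hwff
        have ih := tval_mem_Cl F Fop hOp t' hwt x
        show Cl F x (Fop g (fval Fop (.cons t' .nil) x))
        rw [show fval Fop (OForest.cons t' .nil) x = [tval Fop t' x] from rfl,
          hOp g (tval Fop t' x)]
        exact ih.step g _

theorem exists_tree_of_Cl (F : ι → A → A) (Fop : ι → List A → A)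
    (hOp : ∀ i x, Fop i [x] = F i x) {x y : A} (h : Cl F x y) :
    ∃ t : OTree ι, t.WF (fun _ => 1) ∧ tval Fop t x = y := by
  induction h with
  | base => exact ⟨.leaf, trivial, rfl⟩
  | step i w _ ih =>
    obtain ⟨t, hwf, hv⟩ := ih
    refine ⟨.node i (.cons t .nil), ⟨rfl, hwf, trivial⟩, ?_⟩
    show Fop i (fval Fop (.cons t .nil) x) = F i w
    rw [show fval Fop (OForest.cons t .nil) x = [tval Fop t x] from rfl, hv, hOp]

end Stmt13Aux

namespace Stmt13Aux

section Coloring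
variable {A : Type} (g : A → A)

/-- Grand-orbit relation: some forward iterates meet. -/
def orel (z w : A) : Prop := ∃ n m, g^[n] z = g^[m] w

theorem orel_refl (z : A) : orel g z z := ⟨0, 0, rfl⟩

theorem orel_symm {z w : A} (h : orel g z w) : orel g w z := by
  obtain ⟨n, m, h⟩ := h; exact ⟨m, n, h.symm⟩

theorem orel_shift {z w : A} {n m : ℕ} (h : g^[n] z = g^[m] w) (k : ℕ) :
    g^[n + k] z = g^[m + k] w := by
  rw [add_comm n k, add_comm m k, Function.iterate_add_apply,
    Function.iterate_add_apply, h]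

theorem orel_trans {z w y : A} (h1 : orel g z w) (h2 : orel g w y) : orel g z y := by
  obtain ⟨n, m, h1⟩ := h1
  obtain ⟨n', m', h2⟩ := h2
  refine ⟨n + n', m' + m, ?_⟩
  calc g^[n + n'] z = g^[m + n'] w := orel_shift g h1 n'
    _ = g^[n' + m] w := by rw [add_comm]
    _ = g^[m' + m] y := orel_shift g h2 m

def osetoid : Setoid A := ⟨orel g, orel_refl g, orel_symm g, orel_trans g⟩

/-- Canonical representative of the grand orbit of `z`. -/
noncomputable def qrep (z : A) : A := (@Quotient.mk _ (osetoid g) z).out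

theorem orel_qrep (z : A) : orel g z (qrep g z) :=
  orel_symm g (@Quotient.mk_out _ (osetoid g) z)

theorem qrep_eq {z w : A} (h : orel g z w) : qrep g z = qrep g w := by
  unfold qrep
  rw [Quotient.sound (s := osetoid g) h]

theorem orel_iterate (z : A) (n : ℕ) : orel g (g^[n] z) z := ⟨0, n, rfl⟩

theorem qrep_iterate (z : A) (n : ℕ) : qrep g (g^[n] z) = qrep g z :=
  qrep_eq g (orel_iterate g z n)

/-- The grand orbit of `r` contains a periodic point. -/
def Cyc (r : A) : Prop := ∃ w k, 0 < k ∧ g^[k] w = w ∧ orel g w r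

theorem inj_of_not_cyc {r : A} (h : ¬ Cyc g r) {a b : ℕ}
    (hab : g^[a] r = g^[b] r) : a = b := by
  by_contra hne
  rcases Nat.lt_or_ge a b with hlt | hge
  · exact h ⟨g^[a] r, b - a, by omega, by
      rw [← Function.iterate_add_apply, Nat.sub_add_cancel hlt.le, ← hab], ⟨0, a, rfl⟩⟩
  · have hlt : b < a := by omega
    exact h ⟨g^[b] r, a - b, by omega, by
      rw [← Function.iterate_add_apply, Nat.sub_add_cancel hlt.le, hab], ⟨0, b, rfl⟩⟩

theorem diff_eq {r z : A} (hnc : ¬ Cyc g r) {n m n' m' : ℕ}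
    (h : g^[n] z = g^[m] r) (h' : g^[n'] z = g^[m'] r) :
    (m : ℤ) - n = (m' : ℤ) - n' := by
  rcases Nat.le_total n n' with hle | hle
  · have : g^[n'] z = g^[m + (n' - n)] r := by
      have := orel_shift g h (n' - n)
      rwa [Nat.add_sub_cancel' hle] at this
    have := inj_of_not_cyc g hnc (this.symm.trans h')
    omega
  · have : g^[n] z = g^[m' + (n - n')] r := by
      have := orel_shift g h' (n - n')
      rwa [Nat.add_sub_cancel' hle] at this
    have := inj_of_not_cyc g hnc (this.symm.trans h)
    omega

theorem exists_pair (z : A) : ∃ p : ℕ × ℕ, g^[p.1] z = g^[p.2] (qrep g z) := by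
  obtain ⟨n, m, h⟩ := orel_qrep g z
  exact ⟨(n, m), h⟩

noncomputable def dpair (z : A) : ℕ × ℕ := (exists_pair g z).choose

theorem dpair_spec (z : A) : g^[(dpair g z).1] z = g^[(dpair g z).2] (qrep g z) :=
  (exists_pair g z).choose_spec

noncomputable def dd (z : A) : ℤ := ((dpair g z).2 : ℤ) - (dpair g z).1

theorem dd_succ {z : A} (hnc : ¬ Cyc g (qrep g z)) : dd g (g z) = dd g z + 1 := by
  have h1 := dpair_spec g z
  have h2 := dpair_spec g (g z)
  rw [show g z = g^[1] z from (Function.iterate_one g).symm ▸ rfl] at h2 ⊢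
  rw [qrep_iterate g z 1] at h2
  have h1' : g^[(dpair g z).1] (g^[1] z) = g^[(dpair g z).2 + 1] (qrep g z) := by
    rw [← Function.iterate_add_apply]
    exact orel_shift g h1 1
  have := diff_eq g hnc h2 h1'
  unfold dd
  omega

open scoped Classical in
noncomputable def chi (z : A) : Bool :=
  if h : Cyc g (qrep g z) then decide (z = h.choose) else decide (dd g z % 2 = 0)

theorem chi_spec (z : A) (hz : ∀ n, g (g^[n] z) ≠ g^[n] z) :
    ∃ n m, chi g (g^[n] z) ≠ chi g (g^[m] z) := by
  by_cases h : Cyc g (qrep g z)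
  · obtain ⟨k, hk, hck, hcr⟩ := h.choose_spec
    have hzc : orel g z h.choose := orel_trans g (orel_qrep g z) (orel_symm g hcr)
    obtain ⟨n, m, hnm⟩ := hzc
    have hper : g^[k * m] h.choose = h.choose := by
      rw [Function.iterate_mul]; exact Function.iterate_fixed hck m
    have hreach : g^[(k * m - m) + n] z = h.choose := by
      rw [Function.iterate_add_apply, hnm, ← Function.iterate_add_apply,
        Nat.sub_add_cancel (Nat.le_mul_of_pos_left m hk), hper]
    refine ⟨(k * m - m) + n, ((k * m - m) + n) + 1, ?_⟩
    have e1 : chi g (g^[(k * m - m) + n] z) = true := by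
      unfold chi
      rw [qrep_iterate g z ((k * m - m) + n), dif_pos h]
      simp only [decide_eq_true_eq]
      exact hreach
    have e2 : chi g (g^[((k * m - m) + n) + 1] z) = false := by
      unfold chi
      rw [qrep_iterate g z (((k * m - m) + n) + 1), dif_pos h]
      simp only [decide_eq_false_iff_not]
      intro hbad
      apply hz ((k * m - m) + n)
      rw [Function.iterate_succ_apply' g ((k * m - m) + n) z] at hbad
      rw [hbad, hreach]
    rw [e1, e2]; simp
  · refine ⟨0, 1, ?_⟩
    have hq : qrep g (g z) = qrep g z := by simpa using qrep_iterate g z 1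
    have hsucc : dd g (g z) = dd g z + 1 := dd_succ g h
    have e0 : chi g (g^[0] z) = decide (dd g z % 2 = 0) := by
      unfold chi
      simp only [Function.iterate_zero, id_eq]
      exact dif_neg h
    have e1 : chi g (g^[1] z) = decide (dd g (g z) % 2 = 0) := by
      rw [show (g^[1] z) = g z from by simp]
      unfold chi
      rw [hq, dif_neg h]
    rw [e0, e1, hsucc]
    rcases Int.emod_two_eq_zero_or_one (dd g z) with hp | hp <;>
      simp [hp, Int.add_mul_emod_self_left] <;> omega

end Coloring
end Stmt13Aux

namespace Stmt13Aux
open RamseyAlg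

variable {ι A : Type}

/-- Membership in `FR` for the unary arity function. -/
theorem mem_FR_elim (Fop : ι → List A → A) (a : ℕ → A) {x : A}
    (hx : x ∈ FR (fun _ : ι => 1) Fop a) :
    ∃ (t : OTree ι) (k : ℕ), t.WF (fun _ => 1) ∧ x = tval Fop t (a k) := by
  obtain ⟨t, l, hwf, _, hev⟩ := hx
  obtain ⟨x', hl, hx'⟩ := eval_eq_some Fop t hwf _ _ hev
  cases l with
  | nil => simp at hl
  | cons k l' =>
    simp only [List.map_cons, List.cons.injEq] at hl
    obtain ⟨hk, hl'⟩ := hl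
    exact ⟨t, k, hwf, by rw [hx', ← hk]⟩

theorem mem_FR_of_Cl (F : ι → A → A) (Fop : ι → List A → A)
    (hOp : ∀ i x, Fop i [x] = F i x) (a : ℕ → A) {yy : A} (k : ℕ)
    (h : Cl F (a k) yy) : yy ∈ FR (fun _ : ι => 1) Fop a := by
  obtain ⟨t, hwf, hv⟩ := exists_tree_of_Cl F Fop hOp h
  refine ⟨t, [k], hwf, List.isChain_singleton k, ?_⟩
  rw [show List.map a [k] = [a k] from rfl, eval_singleton Fop t hwf, hv]

/-- Density in the subalgebra topology, reformulated. -/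
theorem dense_iff (F : ι → A → A) :
    (@Dense A (TopologicalSpace.generateFrom {S : Set A | ∀ i, ∀ x ∈ S, F i x ∈ S})
      {c : A | ∀ i, F i c = c}) ↔ ∀ x : A, ∃ y, Cl F x y ∧ ∀ i, F i y = y := by
  letI τ : TopologicalSpace A :=
    TopologicalSpace.generateFrom {S : Set A | ∀ i, ∀ x ∈ S, F i x ∈ S}
  have hopen : ∀ U : Set A, IsOpen U → ∀ i, ∀ x ∈ U, F i x ∈ U := by
    intro U hU
    change TopologicalSpace.GenerateOpen {S : Set A | ∀ i, ∀ x ∈ S, F i x ∈ S} U at hU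
    induction hU with
    | basic S hS => exact hS
    | univ => intro i x _; trivial
    | inter U V _ _ ihU ihV => exact fun i x hx => ⟨ihU i x hx.1, ihV i x hx.2⟩
    | sUnion S _ ih =>
      intro i x hx
      obtain ⟨t, ht, hxt⟩ := hx
      exact ⟨t, ht, ih t ht i x hxt⟩
  constructor
  · intro hd x
    have hx := hd x
    rw [mem_closure_iff] at hx
    have hop : IsOpen {y | Cl F x y} :=
      TopologicalSpace.GenerateOpen.basic _ (fun i y hy => Cl.step i y hy)
    obtain ⟨y, hy1, hy2⟩ := hx _ hop Cl.base
    exact ⟨y, hy1, hy2⟩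
  · intro hP
    rw [dense_iff_inter_open]
    rintro U hU ⟨x, hx⟩
    obtain ⟨y, hy, hfix⟩ := hP x
    exact ⟨y, Cl.subset_closed (hopen U hU) hx hy, hfix⟩

end Stmt13Aux

namespace Stmt13Aux
open RamseyAlg

variable {ι A : Type}

/-- If every element generates a common fixed point, the algebra is Ramsey. -/
theorem ramsey_of_P (F : ι → A → A) (Fop : ι → List A → A)
    (hOp : ∀ i x, Fop i [x] = F i x)
    (hP : ∀ x : A, ∃ y, Cl F x y ∧ ∀ i, F i y = y) :
    RamseyAlgebra (fun _ : ι => 1) Fop := by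
  intro b X
  choose y hyCl hyfix using fun j => hP (b j)
  choose t htwf htval using fun j => exists_tree_of_Cl F Fop hOp (hyCl j)
  obtain ⟨p, hpinf, hpX⟩ :
      ∃ p : ℕ → Prop, (setOf p).Infinite ∧
        ((∀ j, p j → y j ∈ X) ∨ (∀ j, p j → y j ∉ X)) := by
    by_cases hinf : {j | y j ∈ X}.Infinite
    · exact ⟨fun j => y j ∈ X, hinf, Or.inl fun j hj => hj⟩
    · refine ⟨fun j => y j ∉ X, ?_, Or.inr fun j hj => hj⟩
      exact (Set.not_infinite.mp hinf).infinite_compl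
  set e : ℕ → ℕ := Nat.nth p with hedef
  have hemono : StrictMono e := Nat.nth_strictMono hpinf
  have hemem : ∀ k, p (e k) := Nat.nth_mem_of_infinite hpinf
  refine ⟨fun k => y (e k), ⟨fun k => t (e k), fun _ => 1, e, hemono,
    fun k => htwf (e k), ?_⟩, ?_⟩
  · intro j
    have h1 : ((List.range 1).map
        (fun i => b (e ((∑ m ∈ Finset.range j, (fun _ : ℕ => 1) m) + i)))) = [b (e j)] := by
      rw [show List.range 1 = [0] from rfl]
      simp
    rw [h1, eval_singleton Fop _ (htwf (e j)), htval (e j)]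
  · -- homogeneity
    have key : ∀ x ∈ FR (fun _ : ι => 1) Fop (fun k => y (e k)), ∃ k, x = y (e k) := by
      intro x hx
      obtain ⟨tt, k, hwf, hxv⟩ := mem_FR_elim Fop _ hx
      refine ⟨k, ?_⟩
      rw [hxv]
      exact Cl.eq_of_fixed (hyfix (e k)) (tval_mem_Cl F Fop hOp tt hwf _)
    cases hpX with
    | inl hin =>
      left
      intro x hx
      obtain ⟨k, rfl⟩ := key x hx
      exact hin _ (hemem k)
    | inr hout =>
      right
      rw [Set.eq_empty_iff_forall_notMem]
      rintro x ⟨hx, hxX⟩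
      obtain ⟨k, rfl⟩ := key x hx
      exact hout _ (hemem k) hxX

open scoped Classical in
noncomputable def gfun (F : ι → A → A) (z : A) : A :=
  if h : ∃ i, F i z ≠ z then F h.choose z else z

theorem gfun_ne (F : ι → A → A) {z : A} (h : ∃ i, F i z ≠ z) : gfun F z ≠ z := by
  unfold gfun; rw [dif_pos h]; exact h.choose_spec

theorem gfun_cl (F : ι → A → A) (z : A) : Cl F z (gfun F z) := by
  unfold gfun
  split
  · exact Cl.step _ z Cl.base
  · exact Cl.base

/-- A Ramsey unary algebra has a common fixed point in every 1-generated
subalgebra. -/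
theorem P_of_ramsey (F : ι → A → A) (Fop : ι → List A → A)
    (hOp : ∀ i x, Fop i [x] = F i x)
    (hR : RamseyAlgebra (fun _ : ι => 1) Fop) :
    ∀ x : A, ∃ y, Cl F x y ∧ ∀ i, F i y = y := by
  intro x
  by_contra hbad
  push_neg at hbad
  set g : A → A := gfun F with hgdef
  obtain ⟨a, hred, hhom⟩ := hR (fun _ => x) {z | chi g z = true}
  obtain ⟨t, len, e, he, hwf, hev⟩ := hred
  obtain ⟨x', hl, hx'⟩ := eval_eq_some Fop (t 0) (hwf 0) _ _ (hev 0)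
  have hx'x : x' = x := by
    have hmem : x' ∈ List.map
        (fun i => (fun _ : ℕ => x) (e ((∑ m ∈ Finset.range 0, len m) + i)))
        (List.range (len 0)) := by
      rw [hl]; simp
    obtain ⟨i, _, heq⟩ := List.mem_map.mp hmem
    exact heq.symm
  have ha0 : Cl F x (a 0) := by
    rw [hx', hx'x]
    exact tval_mem_Cl F Fop hOp (t 0) (hwf 0) x
  have horb : ∀ n, Cl F (a 0) (g^[n] (a 0)) := by
    intro n
    induction n with
    | zero => exact Cl.base
    | succ n ih =>
      rw [Function.iterate_succ_apply']
      exact Cl.trans ih (gfun_cl F _)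
  have hT : ∀ n, Cl F x (g^[n] (a 0)) := fun n => Cl.trans ha0 (horb n)
  have hz : ∀ n, g (g^[n] (a 0)) ≠ g^[n] (a 0) := by
    intro n
    exact gfun_ne F (hbad _ (hT n))
  obtain ⟨n, m, hnm⟩ := chi_spec g (a 0) hz
  have hmem : ∀ k, g^[k] (a 0) ∈ FR (fun _ : ι => 1) Fop a :=
    fun k => mem_FR_of_Cl F Fop hOp a 0 (horb k)
  cases hhom with
  | inl hsub =>
    apply hnm
    have h1 := hsub (hmem n)
    have h2 := hsub (hmem m)
    simp only [Set.mem_setOf_eq] at h1 h2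
    rw [h1, h2]
  | inr hdis =>
    apply hnm
    have h1 : ¬ (chi g (g^[n] (a 0)) = true) := fun hc =>
      Set.eq_empty_iff_forall_notMem.mp hdis _ ⟨hmem n, hc⟩
    have h2 : ¬ (chi g (g^[m] (a 0)) = true) := fun hc =>
      Set.eq_empty_iff_forall_notMem.mp hdis _ ⟨hmem m, hc⟩
    simp only [Bool.not_eq_true] at h1 h2
    rw [h1, h2]

end Stmt13Aux




open RamseyAlg in
/-- A unary algebra `(A, F)`, with the topology generated by the
universes of its subalgebras, is a Ramsey algebra iff the set of common fixed
points of all the operations is dense in `A`. -/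
theorem stmt13 (ι A : Type) (F : ι → A → A)
    (Fop : ι → List A → A) (hOp : ∀ i x, Fop i [x] = F i x) :
    RamseyAlgebra (fun _ : ι => 1) Fop ↔
      @Dense A
        (TopologicalSpace.generateFrom {S : Set A | ∀ i, ∀ x ∈ S, F i x ∈ S})
        {c : A | ∀ i, F i c = c} := by
  rw [Stmt13Aux.dense_iff F]
  exact ⟨Stmt13Aux.P_of_ramsey F Fop hOp, Stmt13Aux.ramsey_of_P F Fop hOp⟩
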